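/- Define u₀ = F on Γ and u₀ = Ψ₁ on Ω, and recursively u_{n+1} = T u_n. Then the sequence (u_n) is pointwise nondecreasing and uniformly bounded, hence converges pointwise to a Borel function u with Ψ₁ ≤ u ≤ Ψ₂ on Ω and u = F on Γ. -/

import Mathlib

open Metric MeasureTheory

open Classical in
/-- The double-obstacle min-max operator `T`. -/
noncomputable def dppOp {N : ℕ} (Ω : Set (EuclideanSpace ℝ (Fin N)))
    (Ψ₁ Ψ₂ F : EuclideanSpace ℝ (Fin N) → ℝ) (α β ε : ℝ)
    (v : EuclideanSpace ℝ (Fin N) → ℝ) : EuclideanSpace ℝ (Fin N) → ℝ :=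
  fun x => if x ∈ Ω then
      max (Ψ₁ x) (min (Ψ₂ x)
        (α / 2 * sSup (v '' ball x ε) + α / 2 * sInf (v '' ball x ε)
          + β * ⨍ y in ball x ε, v y))
    else F x

section auxdpp
open Filter Topology

lemma aux_bddAbove {E : Type*} (v : E → ℝ) (M : ℝ) (hb : ∀ x, |v x| ≤ M) (s : Set E) :
    BddAbove (v '' s) := ⟨M, by rintro a ⟨y, _, rfl⟩; exact (abs_le.1 (hb y)).2⟩

lemma aux_bddBelow {E : Type*} (v : E → ℝ) (M : ℝ) (hb : ∀ x, |v x| ≤ M) (s : Set E) :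
    BddBelow (v '' s) := ⟨-M, by rintro a ⟨y, _, rfl⟩; exact (abs_le.1 (hb y)).1⟩

lemma aux_lsc {E : Type*} [PseudoMetricSpace E] (v : E → ℝ) (M : ℝ)
    (hb : ∀ x, |v x| ≤ M) {ε : ℝ} (hε : 0 < ε) :
    LowerSemicontinuous fun x => sSup (v '' ball x ε) := by
  intro x c hc
  have hne : (v '' ball x ε).Nonempty := ⟨v x, x, mem_ball_self hε, rfl⟩
  obtain ⟨a, ⟨y, hy, rfl⟩, hac⟩ := exists_lt_of_lt_csSup hne hc
  filter_upwards [isOpen_ball.eventually_mem (mem_ball_comm.1 hy)] with x' hx'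
  exact lt_of_lt_of_le hac (le_csSup (aux_bddAbove v M hb _) ⟨y, mem_ball_comm.1 hx', rfl⟩)

lemma aux_usc {E : Type*} [PseudoMetricSpace E] (v : E → ℝ) (M : ℝ)
    (hb : ∀ x, |v x| ≤ M) {ε : ℝ} (hε : 0 < ε) :
    UpperSemicontinuous fun x => sInf (v '' ball x ε) := by
  intro x c hc
  have hne : (v '' ball x ε).Nonempty := ⟨v x, x, mem_ball_self hε, rfl⟩
  obtain ⟨a, ⟨y, hy, rfl⟩, hac⟩ := exists_lt_of_csInf_lt hne hc
  filter_upwards [isOpen_ball.eventually_mem (mem_ball_comm.1 hy)] with x' hx'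
  exact lt_of_le_of_lt (csInf_le (aux_bddBelow v M hb _) ⟨y, mem_ball_comm.1 hx', rfl⟩) hac

lemma aux_integrableOn {N : ℕ} (v : EuclideanSpace ℝ (Fin N) → ℝ) (hm : Measurable v) (M : ℝ)
    (hb : ∀ x, |v x| ≤ M) (x : EuclideanSpace ℝ (Fin N)) (ε : ℝ) :
    IntegrableOn v (ball x ε) := by
  refine Integrable.mono' (g := fun _ => M) (integrableOn_const measure_ball_lt_top.ne)
    hm.aestronglyMeasurable (ae_of_all _ fun y => ?_)
  simpa [Real.norm_eq_abs] using hb y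

lemma aux_cont_integral {N : ℕ} (v : EuclideanSpace ℝ (Fin N) → ℝ) (hm : Measurable v) (M : ℝ)
    (hb : ∀ x, |v x| ≤ M) {ε : ℝ} (hε : 0 < ε) :
    Continuous fun x => ∫ y in ball x ε, v y := by
  have hM0 : 0 ≤ M := le_trans (abs_nonneg _) (hb 0)
  rw [continuous_iff_continuousAt]
  intro x
  have key : Tendsto (fun x' => ∫ y, (ball x' ε).indicator v y) (𝓝 x)
      (𝓝 (∫ y, (ball x ε).indicator v y)) := by
    apply tendsto_integral_filter_of_dominated_convergence
      ((closedBall x (2*ε)).indicator fun _ => M)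
    · filter_upwards with x'
      exact (hm.indicator measurableSet_ball).aestronglyMeasurable
    · filter_upwards [isOpen_ball.eventually_mem (mem_ball_self hε)] with x' hx'
      refine ae_of_all _ fun y => ?_
      by_cases hy : y ∈ ball x' ε
      · rw [Set.indicator_of_mem hy]
        have hyc : y ∈ closedBall x (2*ε) := by
          rw [mem_closedBall]
          have h1 := mem_ball.1 hy
          have h2 := mem_ball.1 hx'
          calc dist y x ≤ dist y x' + dist x' x := dist_triangle _ _ _
          _ ≤ 2*ε := by linarith
        rw [Set.indicator_of_mem hyc, Real.norm_eq_abs]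
        exact hb y
      · rw [Set.indicator_of_notMem hy]
        simpa using Set.indicator_nonneg (fun _ _ => hM0) y
    · rw [integrable_indicator_iff measurableSet_closedBall]
      exact integrableOn_const measure_closedBall_lt_top.ne
    · have hsph : volume (sphere x ε) = 0 :=
        Measure.addHaar_sphere_of_ne_zero (μ := volume) x hε.ne'
      filter_upwards [measure_eq_zero_iff_ae_notMem.mp hsph] with y hy
      rcases lt_or_gt_of_ne (fun h : dist y x = ε => hy h) with hlt | hgt
      · have hmem : y ∈ ball x ε := mem_ball.2 hlt
        have hev : ∀ᶠ x' in 𝓝 x, y ∈ ball x' ε := by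
          have : x ∈ ball y ε := mem_ball_comm.1 hmem
          filter_upwards [isOpen_ball.eventually_mem this] with x' hx'
          exact mem_ball_comm.1 hx'
        rw [Set.indicator_of_mem hmem]
        refine Tendsto.congr' ?_ tendsto_const_nhds
        filter_upwards [hev] with x' hx' using (Set.indicator_of_mem hx' v).symm
      · have hnmem : y ∉ ball x ε := by simp only [mem_ball, not_lt]; exact hgt.le
        have hev : ∀ᶠ x' in 𝓝 x, y ∉ ball x' ε := by
          have hx : x ∈ (closedBall y ε)ᶜ := by
            simp only [Set.mem_compl_iff, mem_closedBall, not_le]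
            rw [dist_comm]; exact hgt
          filter_upwards [isOpen_compl_iff.2 Metric.isClosed_closedBall |>.eventually_mem hx] with x' hx'
          intro hyy
          exact hx' (mem_closedBall.2 (by rw [dist_comm]; exact (mem_ball.1 hyy).le))
        rw [Set.indicator_of_notMem hnmem]
        refine Tendsto.congr' ?_ tendsto_const_nhds
        filter_upwards [hev] with x' hx' using (Set.indicator_of_notMem hx' v).symm
  simp_rw [← integral_indicator measurableSet_ball]
  exact key

lemma aux_avg_eq {N : ℕ} (v : EuclideanSpace ℝ (Fin N) → ℝ) (x : EuclideanSpace ℝ (Fin N))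
    (ε : ℝ) : (⨍ y in ball x ε, v y) =
      (volume (ball x ε)).toReal⁻¹ * ∫ y in ball x ε, v y := by
  rw [setAverage_eq, smul_eq_mul]; rfl

lemma aux_dppOp_measurable {N : ℕ} (Ω : Set (EuclideanSpace ℝ (Fin N)))
    (hΩ : MeasurableSet Ω) (Ψ₁ Ψ₂ F : EuclideanSpace ℝ (Fin N) → ℝ)
    (hΨ₁m : Measurable Ψ₁) (hΨ₂m : Measurable Ψ₂) (hFm : Measurable F)
    (α β ε : ℝ) (hε : 0 < ε) (v : EuclideanSpace ℝ (Fin N) → ℝ)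
    (hvm : Measurable v) (M : ℝ) (hvb : ∀ x, |v x| ≤ M) :
    Measurable (dppOp Ω Ψ₁ Ψ₂ F α β ε v) := by
  have h1 : Measurable fun x => sSup (v '' ball x ε) := (aux_lsc v M hvb hε).measurable
  have h2 : Measurable fun x => sInf (v '' ball x ε) := (aux_usc v M hvb hε).measurable
  have h3 : Measurable fun x : EuclideanSpace ℝ (Fin N) => ⨍ y in ball x ε, v y := by
    have heq : (fun x : EuclideanSpace ℝ (Fin N) => ⨍ y in ball x ε, v y)
        = fun x => (volume (ball (0 : EuclideanSpace ℝ (Fin N)) ε)).toReal⁻¹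
            * ∫ y in ball x ε, v y := by
      funext x
      rw [aux_avg_eq, Measure.addHaar_ball_center]
    rw [heq]
    exact ((aux_cont_integral v hvm M hvb hε).measurable).const_mul _
  unfold dppOp
  exact Measurable.ite hΩ
    (hΨ₁m.max (hΨ₂m.min (((h1.const_mul _).add (h2.const_mul _)).add (h3.const_mul _)))) hFm

lemma aux_dppOp_bound {N : ℕ} (Ω : Set (EuclideanSpace ℝ (Fin N)))
    (Ψ₁ Ψ₂ F : EuclideanSpace ℝ (Fin N) → ℝ) (α β ε : ℝ)
    (M : ℝ) (h1 : ∀ x, |Ψ₁ x| ≤ M) (h2 : ∀ x, |Ψ₂ x| ≤ M) (h3 : ∀ x, |F x| ≤ M)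
    (v : EuclideanSpace ℝ (Fin N) → ℝ) (x : EuclideanSpace ℝ (Fin N)) :
    |dppOp Ω Ψ₁ Ψ₂ F α β ε v x| ≤ M := by
  unfold dppOp
  split
  · rw [abs_le]
    constructor
    · exact le_trans (abs_le.1 (h1 x)).1 (le_max_left _ _)
    · exact max_le (abs_le.1 (h1 x)).2 (le_trans (min_le_left _ _) (abs_le.1 (h2 x)).2)
  · exact h3 x

lemma aux_dppOp_mono {N : ℕ} (Ω : Set (EuclideanSpace ℝ (Fin N)))
    (Ψ₁ Ψ₂ F : EuclideanSpace ℝ (Fin N) → ℝ) (α β ε : ℝ)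
    (hα : 0 ≤ α) (hβ : 0 ≤ β) (hε : 0 < ε)
    (v w : EuclideanSpace ℝ (Fin N) → ℝ) (hvm : Measurable v) (hwm : Measurable w)
    (Mv : ℝ) (hvb : ∀ x, |v x| ≤ Mv) (Mw : ℝ) (hwb : ∀ x, |w x| ≤ Mw)
    (hvw : ∀ x, v x ≤ w x) (x : EuclideanSpace ℝ (Fin N)) :
    dppOp Ω Ψ₁ Ψ₂ F α β ε v x ≤ dppOp Ω Ψ₁ Ψ₂ F α β ε w x := by
  unfold dppOp
  split
  · have hsup : sSup (v '' ball x ε) ≤ sSup (w '' ball x ε) := by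
      refine csSup_le ⟨v x, x, mem_ball_self hε, rfl⟩ ?_
      rintro a ⟨y, hy, rfl⟩
      exact (hvw y).trans (le_csSup (aux_bddAbove w Mw hwb _) ⟨y, hy, rfl⟩)
    have hinf : sInf (v '' ball x ε) ≤ sInf (w '' ball x ε) := by
      refine le_csInf ⟨w x, x, mem_ball_self hε, rfl⟩ ?_
      rintro a ⟨y, hy, rfl⟩
      exact (csInf_le (aux_bddBelow v Mv hvb _) ⟨y, hy, rfl⟩).trans (hvw y)
    have havg : (⨍ y in ball x ε, v y) ≤ ⨍ y in ball x ε, w y := by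
      rw [aux_avg_eq, aux_avg_eq]
      refine mul_le_mul_of_nonneg_left ?_ (by positivity)
      exact setIntegral_mono_on (aux_integrableOn v hvm Mv hvb x ε)
        (aux_integrableOn w hwm Mw hwb x ε) measurableSet_ball (fun y _ => hvw y)
    have hα2 : (0:ℝ) ≤ α / 2 := by linarith
    exact max_le_max le_rfl (min_le_min le_rfl (add_le_add
      (add_le_add (mul_le_mul_of_nonneg_left hsup hα2) (mul_le_mul_of_nonneg_left hinf hα2))
      (mul_le_mul_of_nonneg_left havg hβ)))
  · exact le_rfl

end auxdpp

open Classical in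
/-- the Perron iteration `u₀ = χ_Γ F + χ_Ω Ψ₁`, `u_{n+1} = T u_n`
is pointwise nondecreasing and uniformly bounded on `X`, hence converges pointwise
to a Borel function `u` with `Ψ₁ ≤ u ≤ Ψ₂` on `Ω` and `u = F` on `Γ`. -/
theorem dppOp_iteration_converges {N : ℕ}
    (Ω : Set (EuclideanSpace ℝ (Fin N)))
    (hΩo : IsOpen Ω) (hΩb : Bornology.IsBounded Ω) (ε₀ : ℝ) (hε₀ : 0 < ε₀)
    (Γ : Set (EuclideanSpace ℝ (Fin N)))
    (hΓ : Γ = {x | x ∉ Ω ∧ Metric.infDist x Ω < ε₀})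
    (X : Set (EuclideanSpace ℝ (Fin N))) (hX : X = Ω ∪ Γ)
    (α β ε : ℝ) (hα : 0 ≤ α) (hα1 : α < 1) (hβ : β = 1 - α)
    (hε : 0 < ε) (hεε₀ : ε < ε₀)
    (Ψ₁ Ψ₂ F : EuclideanSpace ℝ (Fin N) → ℝ)
    (hΨ₁m : Measurable Ψ₁) (hΨ₂m : Measurable Ψ₂) (hFm : Measurable F)
    (hΨ₁b : ∃ M, ∀ x, |Ψ₁ x| ≤ M) (hΨ₂b : ∃ M, ∀ x, |Ψ₂ x| ≤ M)
    (hFb : ∃ M, ∀ x, |F x| ≤ M)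
    (hΨ : ∀ x ∈ X, Ψ₁ x ≤ Ψ₂ x) (hF : ∀ x ∈ Γ, Ψ₁ x ≤ F x ∧ F x ≤ Ψ₂ x)
    (u : ℕ → EuclideanSpace ℝ (Fin N) → ℝ)
    (hu0 : ∀ x, u 0 x = if x ∈ Ω then Ψ₁ x else F x)
    (hrec : ∀ n, u (n + 1) = dppOp Ω Ψ₁ Ψ₂ F α β ε (u n)) :
    (∀ x ∈ X, Monotone fun n => u n x) ∧
    (∃ M : ℝ, ∀ n, ∀ x ∈ X, |u n x| ≤ M) ∧
    (∃ ulim : EuclideanSpace ℝ (Fin N) → ℝ, Measurable ulim ∧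
      (∀ x ∈ X, Filter.Tendsto (fun n => u n x) Filter.atTop (nhds (ulim x))) ∧
      (∀ x ∈ Ω, Ψ₁ x ≤ ulim x ∧ ulim x ≤ Ψ₂ x) ∧
      (∀ x ∈ Γ, ulim x = F x)) := by
  
  obtain ⟨M₁, hM₁⟩ := hΨ₁b
  obtain ⟨M₂, hM₂⟩ := hΨ₂b
  obtain ⟨M₃, hM₃⟩ := hFb
  set M : ℝ := max M₁ (max M₂ M₃) with hMdef
  have hΨ₁M : ∀ x, |Ψ₁ x| ≤ M := fun x => (hM₁ x).trans (le_max_left _ _)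
  have hΨ₂M : ∀ x, |Ψ₂ x| ≤ M :=
    fun x => (hM₂ x).trans ((le_max_left _ _).trans (le_max_right _ _))
  have hFM : ∀ x, |F x| ≤ M :=
    fun x => (hM₃ x).trans ((le_max_right _ _).trans (le_max_right _ _))
  have hβ0 : 0 ≤ β := by rw [hβ]; linarith
  -- uniform bound
  have hbound : ∀ n x, |u n x| ≤ M := by
    intro n
    induction n with
    | zero =>
      intro x
      rw [hu0]
      split
      · exact hΨ₁M x
      · exact hFM x
    | succ n ih =>
      intro x
      rw [hrec n]
      exact aux_dppOp_bound Ω Ψ₁ Ψ₂ F α β ε M hΨ₁M hΨ₂M hFM (u n) x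
  -- measurability
  have hmeas : ∀ n, Measurable (u n) := by
    intro n
    induction n with
    | zero =>
      have : u 0 = fun x => if x ∈ Ω then Ψ₁ x else F x := funext hu0
      rw [this]
      exact Measurable.ite hΩo.measurableSet hΨ₁m hFm
    | succ n ih =>
      rw [hrec n]
      exact aux_dppOp_measurable Ω hΩo.measurableSet Ψ₁ Ψ₂ F hΨ₁m hΨ₂m hFm α β ε hε (u n)
        ih M (hbound n)
  -- step monotonicity
  have hstep : ∀ n x, u n x ≤ u (n + 1) x := by
    intro n
    induction n with
    | zero =>
      intro x
      rw [hu0, hrec 0]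
      unfold dppOp
      by_cases hx : x ∈ Ω
      · rw [if_pos hx, if_pos hx]
        exact le_max_left _ _
      · rw [if_neg hx, if_neg hx]
    | succ n ih =>
      intro x
      rw [hrec n, hrec (n + 1)]
      exact aux_dppOp_mono Ω Ψ₁ Ψ₂ F α β ε hα hβ0 hε (u n) (u (n+1)) (hmeas n)
        (hmeas (n+1)) M (hbound n) M (hbound (n+1)) ih x
  have hmono : ∀ x, Monotone fun n => u n x :=
    fun x => monotone_nat_of_le_succ (fun n => hstep n x)
  -- values on Γ
  have hΓval : ∀ x ∈ Γ, ∀ n, u n x = F x := by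
    intro x hx n
    have hxΩ : x ∉ Ω := (hΓ ▸ hx).1
    cases n with
    | zero => rw [hu0, if_neg hxΩ]
    | succ n =>
      rw [hrec n]
      unfold dppOp
      rw [if_neg hxΩ]
  -- bounds on Ω
  have hupper : ∀ n, ∀ x ∈ Ω, u n x ≤ Ψ₂ x := by
    intro n x hx
    have hxX : x ∈ X := hX ▸ Or.inl hx
    cases n with
    | zero => rw [hu0, if_pos hx]; exact hΨ x hxX
    | succ n =>
      rw [hrec n]
      unfold dppOp
      rw [if_pos hx]
      exact max_le (hΨ x hxX) (min_le_left _ _)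
  have hlower : ∀ n, ∀ x ∈ Ω, Ψ₁ x ≤ u n x := by
    intro n x hx
    cases n with
    | zero => rw [hu0, if_pos hx]
    | succ n =>
      rw [hrec n]
      unfold dppOp
      rw [if_pos hx]
      exact le_max_left _ _
  -- limit
  set ulim : EuclideanSpace ℝ (Fin N) → ℝ := fun x => ⨆ n, u n x with hulim
  have hbdd : ∀ x, BddAbove (Set.range fun n => u n x) := by
    intro x
    exact ⟨M, by rintro _ ⟨n, rfl⟩; exact (abs_le.1 (hbound n x)).2⟩
  have htend : ∀ x, Filter.Tendsto (fun n => u n x) Filter.atTop (nhds (ulim x)) :=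
    fun x => tendsto_atTop_ciSup (hmono x) (hbdd x)
  have hulimm : Measurable ulim :=
    measurable_of_tendsto_metrizable' Filter.atTop hmeas (tendsto_pi_nhds.2 htend)
  refine ⟨fun x _ => hmono x, ⟨M, fun n x _ => hbound n x⟩, ulim, hulimm,
    fun x _ => htend x, fun x hx => ⟨?_, ?_⟩, fun x hx => ?_⟩
  · exact (hlower 0 x hx).trans (le_ciSup (hbdd x) 0)
  · exact ciSup_le fun n => hupper n x hx
  · have : ∀ n, u n x = F x := hΓval x hx
    simp only [hulim]
    rw [show (fun n => u n x) = fun _ : ℕ => F x from funext this]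
    exact ciSup_const
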